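/- Let H be a real Hilbert space and F : H → H be monotone and hemicontinuous. Then for every ε > 0 and every z₀ ∈ H the regularized equation F(x) + ε(x − z₀) = 0 has a unique solution x ∈ H. -/

import Mathlib

open Set
open scoped RealInnerProductSpace

open Finset

lemma cov_ineq {ι : Type*} [Fintype ι] {H : Type*} [NormedAddCommGroup H]
    [InnerProductSpace ℝ H] (l : ι → ℝ) (hl0 : ∀ i, 0 ≤ l i) (hl1 : ∑ i, l i = 1)
    (φ s : ι → H) (h : ∀ i j, 0 ≤ ⟪φ i - φ j, s i - s j⟫) :
    ⟪∑ i, l i • φ i, ∑ i, l i • s i⟫ ≤ ∑ i, l i * ⟪φ i, s i⟫ := by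
  have hbil : ∀ u v : ι → H,
      ⟪∑ i, l i • u i, ∑ j, l j • v j⟫ = ∑ i, ∑ j, l i * l j * ⟪u i, v j⟫ := by
    intro u v
    rw [sum_inner]
    refine Finset.sum_congr rfl fun i _ => ?_
    rw [real_inner_smul_left, inner_sum, Finset.mul_sum]
    refine Finset.sum_congr rfl fun j _ => ?_
    rw [real_inner_smul_right]; ring
  have hP : (0:ℝ) ≤ ∑ i, ∑ j, l i * l j * ⟪φ i - φ j, s i - s j⟫ :=
    Finset.sum_nonneg fun i _ => Finset.sum_nonneg fun j _ =>
      mul_nonneg (mul_nonneg (hl0 i) (hl0 j)) (h i j)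
  have hexp : ∀ i j : ι, l i * l j * ⟪φ i - φ j, s i - s j⟫
      = l i * l j * ⟪φ i, s i⟫ - l i * l j * ⟪φ i, s j⟫
        - l i * l j * ⟪φ j, s i⟫ + l i * l j * ⟪φ j, s j⟫ := by
    intro i j
    rw [inner_sub_left, inner_sub_right, inner_sub_right]
    ring
  have hdiag : ∀ f : ι → ℝ, ∑ i, ∑ j, l i * l j * f i = ∑ i, l i * f i := by
    intro f
    refine Finset.sum_congr rfl fun i _ => ?_
    calc ∑ j, l i * l j * f i = ∑ j, l j * (l i * f i) :=
          Finset.sum_congr rfl fun j _ => by ring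
      _ = (∑ j, l j) * (l i * f i) := by rw [Finset.sum_mul]
      _ = l i * f i := by rw [hl1, one_mul]
  have hdiag' : ∀ f : ι → ℝ, ∑ i, ∑ j, l i * l j * f j = ∑ j, l j * f j := by
    intro f
    rw [Finset.sum_comm]
    calc ∑ j, ∑ i, l i * l j * f j = ∑ j, ∑ i, l j * l i * f j :=
          Finset.sum_congr rfl fun j _ => Finset.sum_congr rfl fun i _ => by ring
      _ = ∑ j, l j * f j := hdiag f
  have hXX : ∑ i, ∑ j, l i * l j * ⟪φ j, s i⟫
      = ⟪∑ i, l i • φ i, ∑ i, l i • s i⟫ := by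
    rw [Finset.sum_comm]
    calc ∑ j, ∑ i, l i * l j * ⟪φ j, s i⟫
        = ∑ j, ∑ i, l j * l i * ⟪φ j, s i⟫ :=
          Finset.sum_congr rfl fun j _ => Finset.sum_congr rfl fun i _ => by ring
      _ = ⟪∑ i, l i • φ i, ∑ i, l i • s i⟫ := (hbil φ s).symm
  have hsplit : ∑ i, ∑ j, l i * l j * ⟪φ i - φ j, s i - s j⟫
      = (∑ i, l i * ⟪φ i, s i⟫) - ⟪∑ i, l i • φ i, ∑ i, l i • s i⟫
        - ⟪∑ i, l i • φ i, ∑ i, l i • s i⟫ + ∑ j, l j * ⟪φ j, s j⟫ := by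
    calc ∑ i, ∑ j, l i * l j * ⟪φ i - φ j, s i - s j⟫
        = ∑ i, ∑ j, (l i * l j * ⟪φ i, s i⟫ - l i * l j * ⟪φ i, s j⟫
            - l i * l j * ⟪φ j, s i⟫ + l i * l j * ⟪φ j, s j⟫) :=
          Finset.sum_congr rfl fun i _ => Finset.sum_congr rfl fun j _ => hexp i j
      _ = _ := by
          simp only [Finset.sum_add_distrib, Finset.sum_sub_distrib]
          rw [hdiag (fun i => ⟪φ i, s i⟫), hdiag' (fun j => ⟪φ j, s j⟫), hXX, ← hbil φ s]
  rw [hsplit] at hP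
  linarith

lemma aux_finite {ι : Type*} [Fintype ι] {H : Type*} [NormedAddCommGroup H]
    [InnerProductSpace ℝ H] (x t : ι → H)
    (hm : ∀ i j, ‖x i - x j‖ ^ 2 ≤ ⟪t i - t j, x i - x j⟫) :
    ∃ c : H, ∀ i, ‖x i - c‖ ^ 2 ≤ ⟪t i, x i - c⟫ := by
  classical
  rcases isEmpty_or_nonempty ι with hι | hι
  · exact ⟨0, fun i => (IsEmpty.false i).elim⟩
  set b : ι → H := fun i => x i - (1/2 : ℝ) • t i with hb
  set a : ι → ℝ := fun i => ‖b i‖ ^ 2 - (1/4) * ‖t i‖ ^ 2 with ha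
  set d : (ι → ℝ) → ℝ := fun l => (∑ i, l i * a i) - ‖∑ i, l i • b i‖ ^ 2 with hd
  have hcont : Continuous d := by
    apply Continuous.sub
    · exact continuous_finset_sum _ fun i _ => (continuous_apply i).mul continuous_const
    · exact ((continuous_finset_sum _ fun i _ =>
        (continuous_apply i).smul continuous_const).norm.pow 2)
  obtain ⟨i₀⟩ := hι
  have hne : (stdSimplex ℝ ι).Nonempty := by
    refine ⟨fun j => if j = i₀ then 1 else 0, fun j => by positivity, ?_⟩
    simp
  obtain ⟨l, hlmem, hlmax⟩ := (isCompact_stdSimplex ℝ ι).exists_isMaxOn hne hcont.continuousOn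
  obtain ⟨hl0, hl1⟩ := hlmem
  set c : H := ∑ i, l i • b i with hc
  refine ⟨c, fun k => ?_⟩
  -- basic expansion, for any index i :
  -- aexp : a i = (‖x i - c‖^2 - ⟪t i, x i - c⟫) + 2 * ⟪c, b i⟫ - ‖c‖^2
  have aexp : ∀ i, a i = (‖x i - c‖ ^ 2 - ⟪t i, x i - c⟫) + 2 * ⟪c, b i⟫ - ‖c‖ ^ 2 := by
    intro i
    have e1 : ‖x i - c‖ ^ 2 = ‖x i‖ ^ 2 - 2 * ⟪x i, c⟫ + ‖c‖ ^ 2 := norm_sub_sq_real _ _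
    have e2 : ⟪t i, x i - c⟫ = ⟪t i, x i⟫ - ⟪t i, c⟫ := inner_sub_right _ _ _
    have e3 : ‖b i‖ ^ 2 = ‖x i‖ ^ 2 - ⟪x i, t i⟫ + (1/4) * ‖t i‖ ^ 2 := by
      rw [hb]
      have := norm_sub_sq_real (x i) ((1/2 : ℝ) • t i)
      rw [real_inner_smul_right, norm_smul] at this
      simp only [Real.norm_eq_abs] at this
      rw [this, abs_of_pos (by norm_num : (0:ℝ) < 1/2)]; ring
    have e4 : ⟪c, b i⟫ = ⟪c, x i⟫ - (1/2) * ⟪c, t i⟫ := by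
      rw [hb]; rw [inner_sub_right, real_inner_smul_right]
    have s1 : ⟪x i, t i⟫ = ⟪t i, x i⟫ := real_inner_comm _ _
    have s2 : ⟪x i, c⟫ = ⟪c, x i⟫ := real_inner_comm _ _
    have s3 : ⟪t i, c⟫ = ⟪c, t i⟫ := real_inner_comm _ _
    rw [ha]; dsimp only; rw [e3, e1, e2, e4, s1, s2, s3]; ring
  -- monotonicity bound : d l ≤ 0
  have hcb : ∑ i, l i * ⟪c, b i⟫ = ‖c‖ ^ 2 := by
    have h1 : ⟪c, ∑ i, l i • b i⟫ = ∑ i, l i * ⟪c, b i⟫ := by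
      rw [inner_sum]
      exact Finset.sum_congr rfl fun i _ => real_inner_smul_right _ _ _
    rw [← h1, ← hc, real_inner_self_eq_norm_sq]
  have hlc : ∑ i, l i * ‖c‖ ^ 2 = ‖c‖ ^ 2 := by rw [← Finset.sum_mul, hl1, one_mul]
  set s : ι → H := fun i => x i - c with hs
  have hdl : d l ≤ 0 := by
    set σ : H := ∑ i, l i • s i with hσdef
    have hσ : σ = (1/2 : ℝ) • ∑ i, l i • t i := by
      have h1 : σ = (∑ i, l i • x i) - c := by
        calc σ = ∑ i, (l i • x i - l i • c) :=
              Finset.sum_congr rfl fun i _ => smul_sub _ _ _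
          _ = (∑ i, l i • x i) - ∑ i, l i • c := Finset.sum_sub_distrib _ _
          _ = (∑ i, l i • x i) - c := by rw [← Finset.sum_smul, hl1, one_smul]
      rw [h1, hc, ← Finset.sum_sub_distrib]
      calc ∑ i, (l i • x i - l i • b i)
          = ∑ i, l i • ((1/2 : ℝ) • t i) := by
            refine Finset.sum_congr rfl fun i _ => ?_
            rw [← smul_sub]
            congr 1
            simp [hb]
        _ = ∑ i, (1/2 : ℝ) • (l i • t i) := by
            refine Finset.sum_congr rfl fun i _ => ?_
            rw [smul_comm]
        _ = (1/2 : ℝ) • ∑ i, l i • t i := by rw [Finset.smul_sum]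
    have hcov := cov_ineq l hl0 hl1 (fun i => t i - s i) s (fun i j => by
      have hss : s i - s j = x i - x j := sub_sub_sub_cancel_right _ _ _
      have h2 : (t i - s i) - (t j - s j) = (t i - t j) - (s i - s j) :=
        sub_sub_sub_comm _ _ _ _
      rw [h2, inner_sub_left, hss, real_inner_self_eq_norm_sq]
      linarith [hm i j])
    have hts : ∑ i, l i • (t i - s i) = (∑ i, l i • t i) - σ := by
      rw [hσdef, ← Finset.sum_sub_distrib]
      exact Finset.sum_congr rfl fun i _ => smul_sub _ _ _
    have hLHS : ⟪∑ i, l i • (t i - s i), ∑ i, l i • s i⟫ = ‖σ‖ ^ 2 := by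
      rw [hts, ← hσdef]
      have : (∑ i, l i • t i) - σ = σ := by
        rw [hσ]
        set v : H := ∑ i, l i • t i
        calc v - (1/2 : ℝ) • v = (1:ℝ) • v - (1/2 : ℝ) • v := by rw [one_smul]
          _ = ((1:ℝ) - 1/2) • v := (sub_smul _ _ _).symm
          _ = (1/2 : ℝ) • v := by norm_num
      rw [this, real_inner_self_eq_norm_sq]
    have hRHS : ∑ i, l i * ⟪t i - s i, s i⟫
        = ∑ i, l i * ⟪t i, s i⟫ - ∑ i, l i * ‖s i‖ ^ 2 := by
      rw [← Finset.sum_sub_distrib]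
      refine Finset.sum_congr rfl fun i _ => ?_
      rw [inner_sub_left, real_inner_self_eq_norm_sq]
      ring
    rw [hLHS, hRHS] at hcov
    -- now express d l
    have hsum : ∑ i, l i * a i
        = ∑ i, l i * (‖s i‖ ^ 2 - ⟪t i, s i⟫) + 2 * ∑ i, l i * ⟪c, b i⟫
          - ∑ i, l i * ‖c‖ ^ 2 := by
      have h3 : ∀ i, l i * a i
          = l i * (‖s i‖ ^ 2 - ⟪t i, s i⟫) + 2 * (l i * ⟪c, b i⟫) - l i * ‖c‖ ^ 2 :=
        fun i => by rw [aexp i]; ring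
      calc ∑ i, l i * a i
          = ∑ i, (l i * (‖s i‖ ^ 2 - ⟪t i, s i⟫) + 2 * (l i * ⟪c, b i⟫)
              - l i * ‖c‖ ^ 2) := Finset.sum_congr rfl fun i _ => h3 i
        _ = _ := by rw [Finset.sum_sub_distrib, Finset.sum_add_distrib, ← Finset.mul_sum]
    have hdd : d l = ∑ i, l i * a i - ‖c‖ ^ 2 := by rw [hd]
    have hsplit : ∑ i, l i * (‖s i‖ ^ 2 - ⟪t i, s i⟫)
        = ∑ i, l i * ‖s i‖ ^ 2 - ∑ i, l i * ⟪t i, s i⟫ := by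
      rw [← Finset.sum_sub_distrib]
      exact Finset.sum_congr rfl fun i _ => by ring
    nlinarith [sq_nonneg ‖σ‖]
  -- optimality
  have hopt : a k - (∑ i, l i * a i) - 2 * ⟪c, b k - c⟫ ≤ 0 := by
    set e : ι → ℝ := fun j => if j = k then 1 else 0 with he
    have hek : e ∈ stdSimplex ℝ ι := by
      constructor
      · intro j
        by_cases h : j = k <;> simp [he, h]
      · simp [he]
    set C : ℝ := ‖b k - c‖ ^ 2 with hC
    set A : ℝ := a k - (∑ i, l i * a i) - 2 * ⟪c, b k - c⟫ with hA
    have hkey : ∀ u : ℝ, 0 < u → u ≤ 1 → A ≤ u * C := by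
      intro u hu0 hu1
      have hmem : (fun i => (1-u) * l i + u * e i) ∈ stdSimplex ℝ ι := by
        have h0 := (convex_stdSimplex ℝ ι) ⟨hl0, hl1⟩ hek (a := 1-u) (b := u)
          (by linarith) hu0.le (by ring)
        have hfun : (fun i => (1-u) * l i + u * e i) = (1-u) • l + u • e := by
          funext i
          simp [smul_eq_mul]
        rw [hfun]
        exact h0
      have p1 : ∑ i, ((1-u) * l i + u * e i) * a i
          = (1-u) * (∑ i, l i * a i) + u * a k := by
        calc ∑ i, ((1-u) * l i + u * e i) * a i
            = ∑ i, ((1-u) * (l i * a i) + u * (e i * a i)) :=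
              Finset.sum_congr rfl fun i _ => by ring
          _ = (1-u) * (∑ i, l i * a i) + u * ∑ i, e i * a i := by
              rw [Finset.sum_add_distrib, ← Finset.mul_sum, ← Finset.mul_sum]
          _ = _ := by
              congr 1
              congr 1
              simp [he]
      have p2 : ∑ i, ((1-u) * l i + u * e i) • b i = c + u • (b k - c) := by
        calc ∑ i, ((1-u) * l i + u * e i) • b i
            = ∑ i, ((1-u) • (l i • b i) + u • (e i • b i)) := by
              refine Finset.sum_congr rfl fun i _ => ?_
              rw [add_smul, mul_smul, mul_smul]
          _ = (1-u) • (∑ i, l i • b i) + u • ∑ i, e i • b i := by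
              rw [Finset.sum_add_distrib, Finset.smul_sum, Finset.smul_sum]
          _ = (1-u) • c + u • b k := by
              rw [← hc]
              congr 1
              congr 1
              simp [he, ite_smul]
          _ = c + u • (b k - c) := by
              have habel : ∀ p q : H, (1-u) • p + u • q = p + u • (q - p) := by
                intro p q
                rw [sub_smul, one_smul, smul_sub]
                abel
              exact habel c (b k)
      have p3 : ‖c + u • (b k - c)‖ ^ 2
          = ‖c‖ ^ 2 + 2 * (u * ⟪c, b k - c⟫) + u ^ 2 * C := by
        rw [norm_add_sq_real, real_inner_smul_right, norm_smul, Real.norm_eq_abs,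
          mul_pow, sq_abs, hC]
      have hdμ : d (fun i => (1-u) * l i + u * e i)
          = (∑ i, l i * a i - ‖c‖ ^ 2) + u * A - u ^ 2 * C := by
        rw [hd]
        dsimp only
        rw [p1, p2, p3, hA]
        try rw [← hc]
        ring
      have hdlval : d l = ∑ i, l i * a i - ‖c‖ ^ 2 := by rw [hd]
      have h3 : d (fun i => (1-u) * l i + u * e i) ≤ d l := hlmax hmem
      rw [hdμ, hdlval] at h3
      have h4 : u * A ≤ u * (u * C) := by nlinarith [h3]
      exact le_of_mul_le_mul_left h4 hu0
    by_contra hcon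
    push_neg at hcon
    have hC0 : 0 ≤ C := by positivity
    set u : ℝ := min 1 (A / (2 * C + 1)) with hu
    have hu0 : 0 < u := lt_min one_pos (div_pos hcon (by positivity))
    have hu1 : u ≤ 1 := min_le_left _ _
    have h5 : A ≤ u * C := hkey u hu0 hu1
    have h6 : u ≤ A / (2 * C + 1) := min_le_right _ _
    have h7 : u * (2 * C + 1) ≤ A := by
      rw [← le_div_iff₀ (by positivity : (0:ℝ) < 2 * C + 1)]
      exact h6
    nlinarith [mul_nonneg hu0.le hC0]
  -- combine
  have hdlval : d l = ∑ i, l i * a i - ‖c‖ ^ 2 := by rw [hd]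
  have e5 : ⟪c, b k - c⟫ = ⟪c, b k⟫ - ‖c‖ ^ 2 := by
    rw [inner_sub_right, real_inner_self_eq_norm_sq]
  have h6 := aexp k
  have h7 : ∑ i, l i * a i - ‖c‖ ^ 2 ≤ 0 := by rw [← hdlval]; exact hdl
  linarith [hopt, h6, h7, e5]

lemma strong_zero {H : Type*} [NormedAddCommGroup H] [InnerProductSpace ℝ H] [CompleteSpace H]
    (G : H → H)
    (hm : ∀ x y : H, ‖x - y‖ ^ 2 ≤ ⟪G x - G y, x - y⟫)
    (hh : ∀ c h : H, ∃ δ > (0:ℝ),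
      ContinuousOn (fun τ : ℝ => ⟪G (c + τ • h), h⟫) (Ioo (-δ) δ)) :
    ∃ c : H, G c = 0 := by
  classical
  -- single constraint sets
  set C : H → Set H := fun x => {c | ‖x - c‖ ^ 2 ≤ ⟪G x, x - c⟫} with hCdef
  have hCball : ∀ x : H,
      C x = Metric.closedBall (x - (1/2 : ℝ) • G x) (‖G x‖ / 2) := by
    intro x
    ext c
    simp only [hCdef, Set.mem_setOf_eq, Metric.mem_closedBall, dist_eq_norm]
    have hid : c - (x - (1/2 : ℝ) • G x) = -((x - c) - (1/2 : ℝ) • G x) := by abel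
    have e1 : ‖c - (x - (1/2 : ℝ) • G x)‖ ^ 2
        = ‖x - c‖ ^ 2 - ⟪G x, x - c⟫ + (‖G x‖ / 2) ^ 2 := by
      rw [hid, norm_neg, norm_sub_sq_real, real_inner_smul_right, norm_smul,
        Real.norm_eq_abs, abs_of_pos (by norm_num : (0:ℝ) < 1/2),
        real_inner_comm (x - c) (G x)]
      ring
    constructor
    · intro hle
      have h2 : ‖c - (x - (1/2 : ℝ) • G x)‖ ^ 2 ≤ (‖G x‖ / 2) ^ 2 := by
        rw [e1]; linarith
      have h3 : (0:ℝ) ≤ ‖G x‖ / 2 := by positivity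
      nlinarith [norm_nonneg (c - (x - (1/2 : ℝ) • G x)), h2, h3]
    · intro hle
      have h2 : ‖c - (x - (1/2 : ℝ) • G x)‖ ^ 2 ≤ (‖G x‖ / 2) ^ 2 := by
        have := norm_nonneg (c - (x - (1/2 : ℝ) • G x))
        nlinarith
      rw [e1] at h2
      linarith
  have hCclosed : ∀ x, IsClosed (C x) := fun x => by
    rw [hCball]; exact Metric.isClosed_closedBall
  have hCconvex : ∀ x, Convex ℝ (C x) := fun x => by
    rw [hCball]; exact convex_closedBall _ _
  have hCbound : ∀ c ∈ C 0, ‖c‖ ≤ ‖G 0‖ := by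
    intro c hc
    have h1 : ‖(0:H) - c‖ ^ 2 ≤ ⟪G 0, (0:H) - c⟫ := hc
    have h2 : ⟪G 0, (0:H) - c⟫ ≤ ‖G 0‖ * ‖(0:H) - c‖ := real_inner_le_norm _ _
    have h3 : ‖(0:H) - c‖ = ‖c‖ := by rw [zero_sub, norm_neg]
    rw [h3] at h1 h2
    rcases eq_or_lt_of_le (norm_nonneg c) with h4 | h4
    · rw [← h4]; exact norm_nonneg _
    · have h5 : ‖c‖ * ‖c‖ ≤ ‖G 0‖ * ‖c‖ := by nlinarith [le_trans h1 h2]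
      exact le_of_mul_le_mul_right h5 h4
  -- finite intersections
  set K : Finset H → Set H := fun T => {c | ∀ x ∈ T, c ∈ C x} with hKdef
  have hKmono : ∀ {T T' : Finset H}, T ⊆ T' → K T' ⊆ K T :=
    fun hTT c hc x hx => hc x (hTT hx)
  have hKne : ∀ T, (K T).Nonempty := by
    intro T
    obtain ⟨c, hc⟩ := aux_finite (fun i : T => (i : H)) (fun i : T => G i)
      (fun i j => hm _ _)
    exact ⟨c, fun x hx => hc ⟨x, hx⟩⟩
  have hKclosed : ∀ T, IsClosed (K T) := by
    intro T
    have : K T = ⋂ x ∈ T, C x := by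
      ext c
      simp [hKdef, Set.mem_iInter]
    rw [this]
    exact isClosed_biInter fun x _ => hCclosed x
  have hKconvex : ∀ T, Convex ℝ (K T) := by
    intro T
    have : K T = ⋂ x ∈ T, C x := by
      ext c
      simp [hKdef, Set.mem_iInter]
    rw [this]
    exact convex_iInter₂ fun x _ => hCconvex x
  -- minimal norm points
  have hP : ∀ T : Finset H, ∃ v ∈ K T, ‖(0:H) - v‖ = ⨅ w : K T, ‖(0:H) - w‖ :=
    fun T => exists_norm_eq_iInf_of_complete_convex (hKne T)
      ((hKclosed T).isComplete) (hKconvex T) 0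
  set V : Finset H → ℝ := fun T => ⨅ w : K T, ‖(0:H) - w‖ with hVdef
  set P : Finset H → H := fun T => (hP T).choose with hPdef
  have hPmem : ∀ T, P T ∈ K T := fun T => (hP T).choose_spec.1
  have hPnorm : ∀ T, ‖P T‖ = V T := by
    intro T
    have := (hP T).choose_spec.2
    rw [zero_sub, norm_neg] at this
    exact this
  have hVle : ∀ T, ∀ c ∈ K T, V T ≤ ‖c‖ := by
    intro T c hc
    have hbdd : BddBelow (Set.range fun w : K T => ‖(0:H) - w‖) :=
      ⟨0, Set.forall_mem_range.2 fun _ => norm_nonneg _⟩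
    have := ciInf_le hbdd (⟨c, hc⟩ : K T)
    rw [zero_sub, norm_neg] at this
    exact this
  have hV0 : ∀ T, 0 ≤ V T := by
    intro T
    haveI : Nonempty (K T) := (hKne T).to_subtype
    exact le_ciInf fun w => norm_nonneg _
  have hVmono : ∀ {T T' : Finset H}, T ⊆ T' → V T ≤ V T' := by
    intro T T' hTT
    calc V T ≤ ‖P T'‖ := hVle T (P T') (hKmono hTT (hPmem T'))
      _ = V T' := hPnorm T'
  have hVbound : ∀ T, V T ≤ ‖G 0‖ := by
    intro T
    calc V T ≤ V (insert 0 T) := hVmono (Finset.subset_insert _ _)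
      _ = ‖P (insert 0 T)‖ := (hPnorm _).symm
      _ ≤ ‖G 0‖ := hCbound _ (hPmem (insert 0 T) 0 (Finset.mem_insert_self _ _))
  -- the supremum
  have hbddV : BddAbove (Set.range V) := ⟨‖G 0‖, Set.forall_mem_range.2 hVbound⟩
  set M : ℝ := sSup (Set.range V) with hMdef
  have hVM : ∀ T, V T ≤ M := fun T => le_csSup hbddV ⟨T, rfl⟩
  have hM0 : 0 ≤ M := le_trans (hV0 ∅) (hVM ∅)
  have hTseq : ∀ n : ℕ, ∃ T : Finset H, M - 1/(n+1) < V T := by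
    intro n
    have h1 : M - 1/(n+1) < M := by
      have : (0:ℝ) < 1/(n+1) := by positivity
      linarith
    obtain ⟨y, hymem, hy⟩ := exists_lt_of_lt_csSup (Set.range_nonempty V) h1
    obtain ⟨T, rfl⟩ := hymem
    exact ⟨T, hy⟩
  choose Tseq hTseq' using hTseq
  set S : ℕ → Finset H := fun n => (Finset.range (n+1)).biUnion Tseq with hSdef
  have hSmono : ∀ {m n : ℕ}, m ≤ n → S m ⊆ S n := by
    intro m n hmn
    exact Finset.biUnion_subset_biUnion_of_subset_left _
      (Finset.range_subset_range.2 (by omega))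
  have hVS : ∀ n, M - 1/(n+1) < V (S n) := by
    intro n
    have h1 : Tseq n ⊆ S n :=
      Finset.subset_biUnion_of_mem _ (Finset.mem_range.2 (by omega))
    exact lt_of_lt_of_le (hTseq' n) (hVmono h1)
  -- parallelogram estimate
  have hpar : ∀ (T : Finset H) (u v : H), u ∈ K T → v ∈ K T →
      ‖u - v‖ ^ 2 ≤ 2 * ‖u‖ ^ 2 + 2 * ‖v‖ ^ 2 - 4 * (V T) ^ 2 := by
    intro T u v hu hv
    have hmid : (1/2 : ℝ) • u + (1/2 : ℝ) • v ∈ K T :=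
      hKconvex T hu hv (by norm_num) (by norm_num) (by norm_num)
    have h1 : V T ≤ ‖(1/2 : ℝ) • u + (1/2 : ℝ) • v‖ := hVle T _ hmid
    have h2 : (1/2 : ℝ) • u + (1/2 : ℝ) • v = (1/2 : ℝ) • (u + v) := by
      rw [smul_add]
    have h3 : ‖(1/2 : ℝ) • (u + v)‖ = (1/2) * ‖u + v‖ := by
      rw [norm_smul, Real.norm_eq_abs, abs_of_pos (by norm_num : (0:ℝ) < 1/2)]
    rw [h2, h3] at h1
    have h4 : (V T) ^ 2 ≤ ((1/2) * ‖u + v‖) ^ 2 :=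
      pow_le_pow_left₀ (hV0 T) h1 2
    have h5 : ‖u + v‖ ^ 2 = ‖u‖ ^ 2 + 2 * ⟪u, v⟫ + ‖v‖ ^ 2 := norm_add_sq_real _ _
    have h6 : ‖u - v‖ ^ 2 = ‖u‖ ^ 2 - 2 * ⟪u, v⟫ + ‖v‖ ^ 2 := norm_sub_sq_real _ _
    nlinarith [h4, h5, h6]
  -- the Cauchy sequence of minimal norm points
  set cs : ℕ → H := fun n => P (S n) with hcsdef
  have hcsK : ∀ n, cs n ∈ K (S n) := fun n => hPmem (S n)
  have hcsnorm : ∀ n, ‖cs n‖ = V (S n) := fun n => hPnorm (S n)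
  have hgap : ∀ N : ℕ, M ^ 2 - V (S N) ^ 2 ≤ 2 * M / (N + 1) := by
    intro N
    have h1 : M - 1/(N+1) < V (S N) := hVS N
    have h2 : V (S N) ≤ M := hVM _
    have h3 : 0 ≤ V (S N) := hV0 _
    have : M ^ 2 - V (S N) ^ 2 = (M - V (S N)) * (M + V (S N)) := by ring
    rw [this]
    have h4 : M - V (S N) ≤ 1/(N+1) := by linarith
    have h5 : M + V (S N) ≤ 2 * M := by linarith
    have h6 : (0:ℝ) ≤ M + V (S N) := by linarith
    calc (M - V (S N)) * (M + V (S N)) ≤ (1/(N+1)) * (M + V (S N)) :=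
          mul_le_mul_of_nonneg_right h4 h6
      _ ≤ (1/(N+1)) * (2 * M) := by
          apply mul_le_mul_of_nonneg_left h5 (by positivity)
      _ = 2 * M / (N + 1) := by ring
  have hdistsq : ∀ N n m : ℕ, N ≤ n → N ≤ m →
      ‖cs n - cs m‖ ^ 2 ≤ 8 * M / (N + 1) := by
    intro N n m hNn hNm
    have hn : cs n ∈ K (S N) := hKmono (hSmono hNn) (hcsK n)
    have hm' : cs m ∈ K (S N) := hKmono (hSmono hNm) (hcsK m)
    have h1 := hpar (S N) (cs n) (cs m) hn hm'
    have h2 : ‖cs n‖ ≤ M := by rw [hcsnorm]; exact hVM _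
    have h3 : ‖cs m‖ ≤ M := by rw [hcsnorm]; exact hVM _
    have h4 : V (S N) ^ 2 ≤ ‖cs n‖ ^ 2 :=
      pow_le_pow_left₀ (hV0 _) (hVle _ _ hn) 2
    have h5 : V (S N) ^ 2 ≤ ‖cs m‖ ^ 2 :=
      pow_le_pow_left₀ (hV0 _) (hVle _ _ hm') 2
    have h6 := hgap N
    have h7 : ‖cs n‖ ^ 2 ≤ M ^ 2 := pow_le_pow_left₀ (norm_nonneg _) h2 2
    have h8 : ‖cs m‖ ^ 2 ≤ M ^ 2 := pow_le_pow_left₀ (norm_nonneg _) h3 2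
    calc ‖cs n - cs m‖ ^ 2 ≤ 2 * ‖cs n‖ ^ 2 + 2 * ‖cs m‖ ^ 2 - 4 * V (S N) ^ 2 := h1
      _ ≤ 4 * (M ^ 2 - V (S N) ^ 2) := by linarith
      _ ≤ 4 * (2 * M / (N + 1)) := mul_le_mul_of_nonneg_left h6 (by norm_num)
      _ = 8 * M / (N + 1) := by ring
  have hb0 : Filter.Tendsto (fun N : ℕ => Real.sqrt (8 * M / (N + 1)))
      Filter.atTop (nhds 0) := by
    have h1 : Filter.Tendsto (fun N : ℕ => 8 * M / (N + 1))
        Filter.atTop (nhds 0) := by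
      have h2 : Filter.Tendsto (fun N : ℕ => 1/((N:ℝ) + 1))
          Filter.atTop (nhds 0) := tendsto_one_div_add_atTop_nhds_zero_nat
      have h3 := h2.const_mul (8 * M)
      rw [mul_zero] at h3
      convert h3 using 2 with N
      ring
    have := (Real.continuous_sqrt.tendsto 0).comp h1
    simpa [Function.comp_def] using this
  have hcauchy : CauchySeq cs := by
    apply cauchySeq_of_le_tendsto_0 (fun N : ℕ => Real.sqrt (8 * M / (N + 1))) _ hb0
    intro n m N hNn hNm
    rw [dist_eq_norm]
    exact Real.le_sqrt_of_sq_le (hdistsq N n m hNn hNm)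
  obtain ⟨c, hclim⟩ := cauchySeq_tendsto_of_complete hcauchy
  -- the limit point satisfies all constraints
  have hcC : ∀ x : H, c ∈ C x := by
    intro x
    set ds : ℕ → H := fun n => P (insert x (S n)) with hdsdef
    have hdsx : ∀ n, ds n ∈ C x :=
      fun n => hPmem (insert x (S n)) x (Finset.mem_insert_self _ _)
    have hdsK : ∀ n, ds n ∈ K (S n) :=
      fun n => hKmono (Finset.subset_insert _ _) (hPmem (insert x (S n)))
    have hdsM : ∀ n, ‖ds n‖ ≤ M := by
      intro n
      rw [hPnorm]
      exact hVM _
    have hdist : ∀ n, ‖cs n - ds n‖ ^ 2 ≤ 8 * M / (n + 1) := by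
      intro n
      have h1 := hpar (S n) (cs n) (ds n) (hcsK n) (hdsK n)
      have h2 : ‖cs n‖ ≤ M := by rw [hcsnorm]; exact hVM _
      have h4 : V (S n) ^ 2 ≤ ‖ds n‖ ^ 2 :=
        pow_le_pow_left₀ (hV0 _) (hVle _ _ (hdsK n)) 2
      have h6 := hgap n
      have h7 : ‖cs n‖ ^ 2 ≤ M ^ 2 := pow_le_pow_left₀ (norm_nonneg _) h2 2
      have h8 : ‖ds n‖ ^ 2 ≤ M ^ 2 := pow_le_pow_left₀ (norm_nonneg _) (hdsM n) 2
      calc ‖cs n - ds n‖ ^ 2 ≤ 2 * ‖cs n‖ ^ 2 + 2 * ‖ds n‖ ^ 2 - 4 * V (S n) ^ 2 := h1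
        _ ≤ 4 * (M ^ 2 - V (S n) ^ 2) := by linarith
        _ ≤ 4 * (2 * M / (n + 1)) := mul_le_mul_of_nonneg_left h6 (by norm_num)
        _ = 8 * M / (n + 1) := by ring
    have hdist0 : Filter.Tendsto (fun n : ℕ => dist (cs n) (ds n))
        Filter.atTop (nhds 0) := by
      apply squeeze_zero (fun n => dist_nonneg)
        (g := fun n : ℕ => Real.sqrt (8 * M / (n + 1)))
      · intro n
        rw [dist_eq_norm]
        exact Real.le_sqrt_of_sq_le (hdist n)
      · exact hb0
    have hdslim : Filter.Tendsto ds Filter.atTop (nhds c) :=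
      hclim.congr_dist hdist0
    exact (hCclosed x).mem_of_tendsto hdslim (Filter.Eventually.of_forall hdsx)
  -- Minty's trick
  have hGc : ∀ h : H, 0 ≤ ⟪G c, h⟫ := by
    intro h
    obtain ⟨δ, hδ, hcont⟩ := hh c h
    set f : ℝ → ℝ := fun τ => ⟪G (c + τ • h), h⟫ with hfdef
    have h0mem : (0:ℝ) ∈ Ioo (-δ) δ := ⟨by linarith, hδ⟩
    have hcw : ContinuousWithinAt f (Ioo (-δ) δ) 0 := hcont 0 h0mem
    have hsub : Ioo (0:ℝ) δ ⊆ Ioo (-δ) δ :=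
      fun τ hτ => ⟨by linarith [hτ.1], hτ.2⟩
    have hten : Filter.Tendsto f (nhdsWithin 0 (Ioo (0:ℝ) δ)) (nhds (f 0)) :=
      hcw.tendsto.mono_left (nhdsWithin_mono 0 hsub)
    haveI : (nhdsWithin (0:ℝ) (Ioo (0:ℝ) δ)).NeBot := by
      apply mem_closure_iff_nhdsWithin_neBot.mp
      rw [closure_Ioo hδ.ne]
      exact ⟨le_rfl, hδ.le⟩
    have hev : ∀ τ ∈ Ioo (0:ℝ) δ, 0 ≤ f τ := by
      intro τ hτ
      have h1 := hcC (c + τ • h)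
      simp only [hCdef, Set.mem_setOf_eq] at h1
      rw [add_sub_cancel_left] at h1
      rw [real_inner_smul_right] at h1
      have h2 : 0 ≤ τ * f τ := le_trans (by positivity) h1
      exact (mul_nonneg_iff_of_pos_left hτ.1).mp h2
    have hf0 : 0 ≤ f 0 := ge_of_tendsto hten
      (eventually_nhdsWithin_of_forall hev)
    have : f 0 = ⟪G c, h⟫ := by
      rw [hfdef]
      norm_num
    linarith [hf0, this.symm.le, this.le]
  have h1 : 0 ≤ ⟪G c, -(G c)⟫ := hGc _
  rw [inner_neg_right, real_inner_self_eq_norm_sq] at h1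
  have h2 : ‖G c‖ ^ 2 = 0 := le_antisymm (by linarith) (by positivity)
  have h3 : ‖G c‖ = 0 := (pow_eq_zero_iff (by norm_num : (2:ℕ) ≠ 0)).mp h2
  exact ⟨c, norm_eq_zero.mp h3⟩

/-- **Unique solvability of the regularized equation for monotone hemicontinuous maps.**
Let `H` be a real Hilbert space and `F : H → H` monotone and hemicontinuous.  Then for every
`ε > 0` and every `z₀ ∈ H` the regularized equation `F x + ε (x − z₀) = 0` has a unique
solution `x ∈ H`. -/
theorem regularized_equation_unique_solvability
    {H : Type*} [NormedAddCommGroup H] [InnerProductSpace ℝ H] [CompleteSpace H]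
    (F : H → H)
    (hmono : ∀ x₁ x₂ : H, 0 ≤ ⟪F x₁ - F x₂, x₁ - x₂⟫)
    (hhemi : ∀ x₀ h₁ h₂ : H, ∃ δ > (0 : ℝ),
      ContinuousOn (fun t : ℝ => ⟪F (x₀ + t • h₁), h₂⟫) (Ioo (-δ) δ)) :
    ∀ ε : ℝ, 0 < ε → ∀ z₀ : H, ∃! x : H, F x + ε • (x - z₀) = 0 := by
  intro ε hε z₀
  set G : H → H := fun x => ε⁻¹ • F x + (x - z₀) with hGdef
  have hGmono : ∀ x y : H, ‖x - y‖ ^ 2 ≤ ⟪G x - G y, x - y⟫ := by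
    intro x y
    have h1 : G x - G y = ε⁻¹ • (F x - F y) + (x - y) := by
      rw [hGdef]
      dsimp only
      rw [smul_sub]
      abel
    rw [h1, inner_add_left, real_inner_smul_left, real_inner_self_eq_norm_sq]
    have h2 := hmono x y
    have h3 : 0 ≤ ε⁻¹ := by positivity
    nlinarith [mul_nonneg h3 h2]
  have hGhemi : ∀ c h : H, ∃ δ > (0:ℝ),
      ContinuousOn (fun τ : ℝ => ⟪G (c + τ • h), h⟫) (Ioo (-δ) δ) := by
    intro c h
    obtain ⟨δ, hδ, hcont⟩ := hhemi c h h
    refine ⟨δ, hδ, ?_⟩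
    have hc2 : ContinuousOn
        (fun τ : ℝ => ε⁻¹ * ⟪F (c + τ • h), h⟫ + ⟪c + τ • h - z₀, h⟫)
        (Ioo (-δ) δ) := by
      apply ContinuousOn.add
      · exact continuousOn_const.mul hcont
      · apply Continuous.continuousOn
        exact Continuous.inner
          ((continuous_const.add (continuous_id.smul continuous_const)).sub
            continuous_const) continuous_const
    apply hc2.congr
    intro τ _
    rw [hGdef]
    dsimp only
    rw [inner_add_left, real_inner_smul_left]
  obtain ⟨c, hc⟩ := strong_zero G hGmono hGhemi
  have hsol : F c + ε • (c - z₀) = 0 := by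
    have h1 : ε • G c = 0 := by rw [hc, smul_zero]
    rw [hGdef] at h1
    dsimp only at h1
    rw [smul_add, smul_smul, mul_inv_cancel₀ hε.ne', one_smul] at h1
    exact h1
  refine ⟨c, hsol, fun y hy => ?_⟩
  have h2 : F y - F c + ε • (y - c) = 0 := by
    calc F y - F c + ε • (y - c)
        = (F y + ε • (y - z₀)) - (F c + ε • (c - z₀)) := by
          rw [smul_sub, smul_sub, smul_sub]
          abel
      _ = 0 := by rw [hy, hsol, sub_zero]
  have h3 : ⟪F y - F c + ε • (y - c), y - c⟫ = 0 := by
    rw [h2, inner_zero_left]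
  rw [inner_add_left, real_inner_smul_left, real_inner_self_eq_norm_sq] at h3
  have h4 := hmono y c
  have h5 : ‖y - c‖ ^ 2 ≤ 0 := by nlinarith
  have h6 : ‖y - c‖ = 0 := by nlinarith [norm_nonneg (y - c), sq_nonneg ‖y - c‖]
  have h7 : y - c = 0 := norm_eq_zero.mp h6
  exact sub_eq_zero.mp h7
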